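/- Let π be a disjunctive logic program. If M is a stable model of π, then M̄ = {∼p : p ∈ Atoms(π) \ M} is conflict-free in the induced assumption-based framework ABF(π): there is no atom p with ∼p ∈ M̄ and π ∪ M̄ ⊢ p. -/

import Mathlib

namespace DLP

/-- Formulas of the language ℒ: disjunctions of atoms `p₁ ∨ … ∨ p_n`,
negated atoms `∼p`, and program rules
`q₁,…,q_m, ∼r₁,…,∼r_k → p₁ ∨ … ∨ p_n`. -/
inductive Formula (α : Type*) where
  | disj : List α → Formula α
  | neg  : α → Formula α
  | rule : List α → List α → List α → Formula α

/-- A program rule: positive body atoms, negated body atoms, and head disjuncts. -/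
structure Rule (α : Type*) where
  pos : List α
  neg : List α
  head : List α

/-- The ℒ-formula corresponding to a rule. -/
def Rule.toFormula {α : Type*} (r : Rule α) : Formula α :=
  Formula.rule r.pos r.neg r.head

/-- The set of ℒ-formulas corresponding to a program. -/
def formulas {α : Type*} (π : Set (Rule α)) : Set (Formula α) :=
  Rule.toFormula '' π

/-- `Atoms(π)`: the atoms occurring in the program π. -/
def atoms {α : Type*} (π : Set (Rule α)) : Set α :=
  {p | ∃ r ∈ π, p ∈ r.pos ∨ p ∈ r.neg ∨ p ∈ r.head}

/-- `∼Atoms(π)`. -/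
def negAtoms {α : Type*} (π : Set (Rule α)) : Set (Formula α) :=
  Formula.neg '' atoms π

/-- Satisfaction of an ℒ-formula by a set of atoms `M`. -/
def satisfies {α : Type*} (M : Set α) : Formula α → Prop
  | Formula.disj l => ∃ p ∈ l, p ∈ M
  | Formula.neg p => p ∉ M
  | Formula.rule pb nb hd =>
      ((∀ p ∈ pb, p ∈ M) ∧ (∀ q ∈ nb, q ∉ M)) → ∃ p ∈ hd, p ∈ M

/-- `M` is a model of the program π. -/
def isModel {α : Type*} (M : Set α) (π : Set (Rule α)) : Prop :=
  ∀ r ∈ π, satisfies M r.toFormula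

/-- The Gelfond–Lifschitz reduct `π^S`. -/
def reduct {α : Type*} (π : Set (Rule α)) (S : Set α) : Set (Rule α) :=
  {r' | ∃ r ∈ π, (∀ x ∈ r.neg, x ∉ S) ∧ r' = ⟨r.pos, [], r.head⟩}

/-- `M` is a (two-valued) stable model of π: a ⊆-minimal model of `π^M`. -/
def stableModel {α : Type*} (π : Set (Rule α)) (M : Set α) : Prop :=
  M ⊆ atoms π ∧ isModel M (reduct π M) ∧
    ∀ N : Set α, N ⊂ M → ¬ isModel N (reduct π M)

/-- The consequence relation `Δ ⊢ φ`, generated by membership and the rules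
[MP], [Res] and [RBC].  Note that `Δ ⊢ p` for an atom `p` is rendered as
`Derives Δ (Formula.disj [p])`, and the premise `→ φᵢ` used in [RBC] is the
rule with empty body and head `φᵢ`. -/
inductive Derives {α : Type*} : Set (Formula α) → Formula α → Prop
  | mem {Δ : Set (Formula α)} {φ : Formula α} :
      φ ∈ Δ → Derives Δ φ
  | mp {Δ : Set (Formula α)} {pb nb hd : List α} :
      Derives Δ (Formula.rule pb nb hd) →
      (∀ p ∈ pb, Derives Δ (Formula.disj [p])) →
      (∀ q ∈ nb, Derives Δ (Formula.neg q)) →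
      Derives Δ (Formula.disj hd)
  | res {Δ : Set (Formula α)} {L₁ Φ L₂ : List α} :
      Derives Δ (Formula.disj (L₁ ++ Φ ++ L₂)) →
      (∀ q ∈ Φ, Derives Δ (Formula.neg q)) →
      Derives Δ (Formula.disj (L₁ ++ L₂))
  | rbc {Δ : Set (Formula α)} {Φ hd : List α} :
      Derives Δ (Formula.disj Φ) →
      (∀ q ∈ Φ, Derives (Δ ∪ {Formula.rule [] [] [q]}) (Formula.disj hd)) →
      Derives Δ (Formula.disj hd)

/-- `M̄ = {∼p : p ∈ Atoms(π) \ M}`. -/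
def barSet {α : Type*} (π : Set (Rule α)) (M : Set α) : Set (Formula α) :=
  Formula.neg '' (atoms π \ M)

/-- `⌊Δ⌋ = {p : ∼p ∈ Δ}`. -/
def floorSet {α : Type*} (Δ : Set (Formula α)) : Set α :=
  {p | Formula.neg p ∈ Δ}

/-- `Δ̲ = Atoms(π) \ ⌊Δ⌋`. -/
def underline {α : Type*} (π : Set (Rule α)) (Δ : Set (Formula α)) : Set α :=
  atoms π \ floorSet Δ

/-- In `ABF(π)`, a set of assumptions `Δ` attacks the assumption `∼p`
iff `π ∪ Δ ⊢ p`. -/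
def attacks {α : Type*} (π : Set (Rule α)) (Δ : Set (Formula α)) (p : α) : Prop :=
  Derives (formulas π ∪ Δ) (Formula.disj [p])

/-- `Δ` is conflict-free in `ABF(π)`: no subset of `Δ` attacks a member of `Δ`. -/
def conflictFree {α : Type*} (π : Set (Rule α)) (Δ : Set (Formula α)) : Prop :=
  ¬ ∃ Δ' ⊆ Δ, ∃ p : α, Formula.neg p ∈ Δ ∧ attacks π Δ' p

/-- `Δ` is a stable extension of `ABF(π)`: `Δ ⊆ ∼Atoms(π)` is conflict-free and
attacks every assumption in `∼Atoms(π) \ Δ`. -/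
def stableExtension {α : Type*} (π : Set (Rule α)) (Δ : Set (Formula α)) : Prop :=
  Δ ⊆ negAtoms π ∧ conflictFree π Δ ∧
    ∀ p ∈ atoms π, Formula.neg p ∉ Δ → attacks π Δ p

/-- Soundness of `Derives` with respect to classical satisfaction. -/
lemma derives_sound {α : Type*} {M : Set α} {Δ : Set (Formula α)} {φ : Formula α}
    (h : Derives Δ φ) (hΔ : ∀ ψ ∈ Δ, satisfies M ψ) : satisfies M φ := by
  induction h generalizing M with
  | mem hφ => exact hΔ _ hφ
  | mp _ _ _ ih ihp ihn =>
    have hr := ih hΔ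
    exact hr ⟨fun p hp => by
        obtain ⟨q, hq, hqM⟩ := ihp p hp hΔ
        simp only [List.mem_singleton] at hq; subst hq; exact hqM,
      fun q hq => ihn q hq hΔ⟩
  | res _ _ ih ihn =>
    obtain ⟨p, hp, hpM⟩ := ih hΔ
    simp only [List.mem_append] at hp
    rcases hp with (hp | hp) | hp
    · exact ⟨p, by simp [hp], hpM⟩
    · exact absurd hpM (ihn p hp hΔ)
    · exact ⟨p, by simp [hp], hpM⟩
  | rbc _ _ ih ihq =>
    obtain ⟨q, hq, hqM⟩ := ih hΔ
    apply ihq q hq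
    intro ψ hψ
    rcases hψ with hψ | hψ
    · exact hΔ _ hψ
    · simp only [Set.mem_singleton_iff] at hψ
      subst hψ
      exact fun _ => ⟨q, by simp, hqM⟩

/-- if `M` is a stable model of π then `M̄` is conflict-free in
`ABF(π)`: there is no atom `p` with `∼p ∈ M̄` and `π ∪ M̄ ⊢ p`. -/
theorem stmt14 {α : Type*} (π : Set (Rule α)) (hfin : π.Finite)
    (M : Set α) (hst : stableModel π M) :
    ¬ ∃ p : α, Formula.neg p ∈ barSet π M ∧
        Derives (formulas π ∪ barSet π M) (Formula.disj [p]) := by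
  rintro ⟨p, hpbar, hd⟩
  obtain ⟨q, ⟨hq_atom, hqM⟩, hq⟩ := hpbar
  cases hq
  have hsat : ∀ ψ ∈ formulas π ∪ barSet π M, satisfies M ψ := by
    rintro ψ (⟨r, hr, rfl⟩ | ⟨a, ⟨_, haM⟩, rfl⟩)
    · intro ⟨hpos, hneg⟩
      have hred : (⟨r.pos, [], r.head⟩ : Rule α) ∈ reduct π M :=
        ⟨r, hr, hneg, rfl⟩
      exact hst.2.1 (⟨r.pos, [], r.head⟩ : Rule α) hred ⟨hpos, by simp⟩
    · exact haM
  obtain ⟨x, hx, hxM⟩ := derives_sound hd hsat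
  simp only [List.mem_singleton] at hx
  subst hx
  exact hqM hxM

end DLP
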